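/- arXiv:2407.19595 — 9 statements merged into one kernel-verified Lean document; each statement's English description precedes it below -/
import Mathlib

section
/- For every real p ≥ 1 and all x, y ∈ ℝ² with x₀ > |x₁| and y₀ > |y₁| (i.e., x and y are future-directed timelike), the reverse triangle inequality holds: ((x₀+y₀)^p − |x₁+y₁|^p)^{1/p} ≥ (x₀^p − |x₁|^p)^{1/p} + (y₀^p − |y₁|^p)^{1/p}. -/
/-- For every real `p ≥ 1` and all future-directed timelike vectors
`x = (x₀, x₁)`, `y = (y₀, y₁)` in `ℝ²` (i.e. `x₀ > |x₁|`, `y₀ > |y₁|`), the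
reverse triangle inequality for the Lorentzian p-norm holds. -/
theorem lorentz_pnorm_reverse_triangle (p : ℝ) (hp : 1 ≤ p)
    (x₀ x₁ y₀ y₁ : ℝ) (hx : |x₁| < x₀) (hy : |y₁| < y₀) :
    ((x₀ + y₀) ^ p - |x₁ + y₁| ^ p) ^ (1 / p) ≥
      (x₀ ^ p - |x₁| ^ p) ^ (1 / p) + (y₀ ^ p - |y₁| ^ p) ^ (1 / p) := by
  have hp0 : (0 : ℝ) < p := lt_of_lt_of_le one_pos hp
  have hpne : p ≠ 0 := hp0.ne'
  have hb : (0 : ℝ) ≤ |x₁| := abs_nonneg _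
  have hd : (0 : ℝ) ≤ |y₁| := abs_nonneg _
  have hx0 : 0 < x₀ := lt_of_le_of_lt hb hx
  have hy0 : 0 < y₀ := lt_of_le_of_lt hd hy
  set A := (x₀ ^ p - |x₁| ^ p) ^ (1 / p) with hA
  set C := (y₀ ^ p - |y₁| ^ p) ^ (1 / p) with hC
  have hxp : |x₁| ^ p ≤ x₀ ^ p := Real.rpow_le_rpow hb hx.le hp0.le
  have hyp : |y₁| ^ p ≤ y₀ ^ p := Real.rpow_le_rpow hd hy.le hp0.le
  have hA0 : 0 ≤ A := Real.rpow_nonneg (by linarith) _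
  have hC0 : 0 ≤ C := Real.rpow_nonneg (by linarith) _
  have hAp : A ^ p = x₀ ^ p - |x₁| ^ p := by
    rw [hA, one_div, Real.rpow_inv_rpow (by linarith) hpne]
  have hCp : C ^ p = y₀ ^ p - |y₁| ^ p := by
    rw [hC, one_div, Real.rpow_inv_rpow (by linarith) hpne]
  -- Minkowski for the two-dimensional vectors (A, |x₁|) and (C, |y₁|)
  have mink := Real.Lp_add_le_of_nonneg (s := (Finset.univ : Finset (Fin 2)))
    (f := ![A, |x₁|]) (g := ![C, |y₁|]) hp
    (by intro i _; fin_cases i <;> simp [hA0, hb])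
    (by intro i _; fin_cases i <;> simp [hC0, hd])
  simp only [Fin.sum_univ_two, Matrix.cons_val_zero, Matrix.cons_val_one, Matrix.head_cons]
    at mink
  rw [hAp, hCp] at mink
  have hxe : (x₀ ^ p - |x₁| ^ p + |x₁| ^ p) ^ (1 / p) = x₀ := by
    rw [sub_add_cancel, one_div, Real.rpow_rpow_inv hx0.le hpne]
  have hye : (y₀ ^ p - |y₁| ^ p + |y₁| ^ p) ^ (1 / p) = y₀ := by
    rw [sub_add_cancel, one_div, Real.rpow_rpow_inv hy0.le hpne]
  rw [hxe, hye] at mink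
  -- mink : ((A+C)^p + (|x₁|+|y₁|)^p)^(1/p) ≤ x₀ + y₀
  have hsum0 : 0 ≤ (A + C) ^ p + (|x₁| + |y₁|) ^ p :=
    add_nonneg (Real.rpow_nonneg (by linarith) _) (Real.rpow_nonneg (by linarith) _)
  have key : (A + C) ^ p + (|x₁| + |y₁|) ^ p ≤ (x₀ + y₀) ^ p := by
    have := Real.rpow_le_rpow (Real.rpow_nonneg hsum0 _) mink hp0.le
    rwa [one_div, Real.rpow_inv_rpow hsum0 hpne] at this
  have habs : |x₁ + y₁| ^ p ≤ (|x₁| + |y₁|) ^ p :=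
    Real.rpow_le_rpow (abs_nonneg _) (abs_add_le _ _) hp0.le
  have final : (A + C) ^ p ≤ (x₀ + y₀) ^ p - |x₁ + y₁| ^ p := by linarith
  have := Real.rpow_le_rpow (Real.rpow_nonneg (add_nonneg hA0 hC0) _) final
    (by positivity : (0:ℝ) ≤ 1 / p)
  rwa [one_div, Real.rpow_rpow_inv (add_nonneg hA0 hC0) hpne, ← one_div] at this
end

section
/- For every real p ≥ 1, the Lorentzian p-norm N_p, i.e., the function x ↦ (x₀^p − |x₁|^p)^{1/p}, is concave on the closed future cone {x ∈ ℝ² : x₀ ≥ |x₁|}. -/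
open Real

private lemma lorentz_superadd (p : ℝ) (hp : 1 ≤ p) {a b c d : ℝ}
    (hb0 : 0 ≤ b) (hba : b ≤ a) (hd0 : 0 ≤ d) (hdc : d ≤ c) :
    (a ^ p - b ^ p) ^ (1 / p) + (c ^ p - d ^ p) ^ (1 / p)
      ≤ ((a + c) ^ p - (b + d) ^ p) ^ (1 / p) := by
  have hp0 : 0 < p := lt_of_lt_of_le one_pos hp
  have ha0 : 0 ≤ a := hb0.trans hba
  have hc0 : 0 ≤ c := hd0.trans hdc
  set A := (a ^ p - b ^ p) ^ (1 / p) with hA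
  set C := (c ^ p - d ^ p) ^ (1 / p) with hC
  have habp : (0:ℝ) ≤ a ^ p - b ^ p := sub_nonneg.2 (rpow_le_rpow hb0 hba hp0.le)
  have hcdp : (0:ℝ) ≤ c ^ p - d ^ p := sub_nonneg.2 (rpow_le_rpow hd0 hdc hp0.le)
  have hA0 : 0 ≤ A := rpow_nonneg habp _
  have hC0 : 0 ≤ C := rpow_nonneg hcdp _
  have hAp : A ^ p = a ^ p - b ^ p := by
    rw [hA, ← rpow_mul habp, one_div, inv_mul_cancel₀ hp0.ne', rpow_one]
  have hCp : C ^ p = c ^ p - d ^ p := by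
    rw [hC, ← rpow_mul hcdp, one_div, inv_mul_cancel₀ hp0.ne', rpow_one]
  -- Minkowski in ℝ²: ((A+C)^p + (b+d)^p)^(1/p) ≤ (A^p + b^p)^(1/p) + (C^p + d^p)^(1/p)
  have mink := Real.Lp_add_le_of_nonneg (s := Finset.univ) (f := ![A, b]) (g := ![C, d]) hp
    (by intro i _; fin_cases i <;> simpa) (by intro i _; fin_cases i <;> simpa)
  simp only [Fin.sum_univ_two, Matrix.cons_val_zero, Matrix.cons_val_one, Matrix.head_cons]
    at mink
  have hApb : A ^ p + b ^ p = a ^ p := by rw [hAp]; ring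
  have hCpd : C ^ p + d ^ p = c ^ p := by rw [hCp]; ring
  rw [hApb, hCpd] at mink
  have hax : (a ^ p) ^ (1/p) = a := by
    rw [← rpow_mul ha0, mul_one_div, div_self hp0.ne', rpow_one]
  have hcx : (c ^ p) ^ (1/p) = c := by
    rw [← rpow_mul hc0, mul_one_div, div_self hp0.ne', rpow_one]
  rw [hax, hcx] at mink
  -- raise both sides to the p-th power
  have key : (A + C) ^ p + (b + d) ^ p ≤ (a + c) ^ p := by
    have h1 : (((A + C) ^ p + (b + d) ^ p) ^ (1/p)) ^ p ≤ (a + c) ^ p :=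
      rpow_le_rpow (rpow_nonneg (by positivity) _) mink hp0.le
    rwa [← rpow_mul (by positivity), one_div, inv_mul_cancel₀ hp0.ne', rpow_one] at h1
  have : (A + C) ^ p ≤ (a + c) ^ p - (b + d) ^ p := by linarith
  calc A + C = ((A + C) ^ p) ^ (1/p) := by
        rw [← rpow_mul (by positivity), mul_one_div, div_self hp0.ne', rpow_one]
    _ ≤ ((a + c) ^ p - (b + d) ^ p) ^ (1/p) :=
        rpow_le_rpow (rpow_nonneg (by positivity) _) this (by positivity)

private lemma lorentz_homog (p : ℝ) (hp : 1 ≤ p) {t a b : ℝ} (ht : 0 ≤ t)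
    (hb0 : 0 ≤ b) (hba : b ≤ a) :
    ((t * a) ^ p - (t * b) ^ p) ^ (1 / p) = t * (a ^ p - b ^ p) ^ (1 / p) := by
  have hp0 : 0 < p := lt_of_lt_of_le one_pos hp
  have ha0 : 0 ≤ a := hb0.trans hba
  have habp : (0:ℝ) ≤ a ^ p - b ^ p := sub_nonneg.2 (rpow_le_rpow hb0 hba hp0.le)
  rw [mul_rpow ht ha0, mul_rpow ht hb0, ← mul_sub,
    mul_rpow (rpow_nonneg ht _) habp, ← rpow_mul ht, mul_one_div, div_self hp0.ne', rpow_one]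

/-- For every real `p ≥ 1`, the Lorentzian p-norm `x ↦ (x₀^p − |x₁|^p)^(1/p)`
is concave on the closed future cone `{x ∈ ℝ² : x₀ ≥ |x₁|}`. -/
theorem concaveOn_lorentz_pnorm (p : ℝ) (hp : 1 ≤ p) :
    ConcaveOn ℝ {x : ℝ × ℝ | |x.2| ≤ x.1}
      (fun x : ℝ × ℝ => (x.1 ^ p - |x.2| ^ p) ^ (1 / p)) := by
  constructor
  · intro x hx y hy s t hs ht hst
    simp only [Set.mem_setOf_eq] at *
    calc |(s • x + t • y).2| ≤ s * |x.2| + t * |y.2| := by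
          simp only [Prod.snd_add, Prod.smul_snd, smul_eq_mul]
          refine (abs_add_le _ _).trans ?_
          rw [abs_mul, abs_mul, abs_of_nonneg hs, abs_of_nonneg ht]
      _ ≤ (s • x + t • y).1 := by
          simp only [Prod.fst_add, Prod.smul_fst, smul_eq_mul]
          exact add_le_add (mul_le_mul_of_nonneg_left hx hs)
            (mul_le_mul_of_nonneg_left hy ht)
  · intro x hx y hy s t hs ht hst
    simp only [Set.mem_setOf_eq] at hx hy
    simp only [Prod.fst_add, Prod.snd_add, Prod.smul_fst, Prod.smul_snd, smul_eq_mul]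
    have habs2 : 0 ≤ |x.2| := abs_nonneg _
    have habs2' : 0 ≤ |y.2| := abs_nonneg _
    have hsx : |s * x.2| = s * |x.2| := by rw [abs_mul, abs_of_nonneg hs]
    have hty : |t * y.2| = t * |y.2| := by rw [abs_mul, abs_of_nonneg ht]
    calc s • ((x.1 ^ p - |x.2| ^ p) ^ (1/p)) + t • ((y.1 ^ p - |y.2| ^ p) ^ (1/p))
        = ((s * x.1) ^ p - (s * |x.2|) ^ p) ^ (1/p)
          + ((t * y.1) ^ p - (t * |y.2|) ^ p) ^ (1/p) := by
          rw [lorentz_homog p hp hs habs2 hx, lorentz_homog p hp ht habs2' hy]; rfl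
      _ ≤ ((s * x.1 + t * y.1) ^ p - (s * |x.2| + t * |y.2|) ^ p) ^ (1/p) :=
          lorentz_superadd p hp (by positivity) (mul_le_mul_of_nonneg_left hx hs)
            (by positivity) (mul_le_mul_of_nonneg_left hy ht)
      _ ≤ ((s * x.1 + t * y.1) ^ p - |s * x.2 + t * y.2| ^ p) ^ (1/p) := by
          have hp0 : 0 < p := lt_of_lt_of_le one_pos hp
          have h1 : |s * x.2 + t * y.2| ≤ s * |x.2| + t * |y.2| := by
            refine (abs_add_le _ _).trans ?_; rw [hsx, hty]
          have h2 : s * |x.2| + t * |y.2| ≤ s * x.1 + t * y.1 :=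
            add_le_add (mul_le_mul_of_nonneg_left hx hs)
              (mul_le_mul_of_nonneg_left hy ht)
          have ha1 : |s * x.2 + t * y.2| ^ p ≤ (s * |x.2| + t * |y.2|) ^ p :=
            rpow_le_rpow (abs_nonneg _) h1 hp0.le
          have h3 : (s * |x.2| + t * |y.2|) ^ p ≤ (s * x.1 + t * y.1) ^ p :=
            rpow_le_rpow (by positivity) h2 hp0.le
          exact rpow_le_rpow (by linarith) (by linarith) (by positivity)
end

section
/- For every real p with 1 < p and p ≠ 2, the Lorentzian parallelogram law fails for the vectors x = (2,0) and y = (1, 1/4): concretely, 8 + (1 − (1/4)^p)^{2/p} ≠ (3^p − (1/4)^p)^{2/p}. (Here 8 + 2(1 − (1/4)^p)^{2/p} = 2·N_p(x)² + 2·N_p(y)², and (3^p − (1/4)^p)^{2/p} + (1 − (1/4)^p)^{2/p} = N_p(x+y)² + N_p(x−y)².) -/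
/-- Key lemma: for `q > 0`, `q ≠ 1`, and `0 < v < 1`, we have
`(8+v)^q - v^q ≠ 9^q - 1`, by strict monotonicity of `t ↦ (8+t)^q - t^q`. -/
lemma lorentz_key (q : ℝ) (hq : 0 < q) (hq1 : q ≠ 1) (v : ℝ) (hv0 : 0 < v) (hv1 : v < 1) :
    (8 + v) ^ q - v ^ q ≠ (9 : ℝ) ^ q - 1 := by
  set g : ℝ → ℝ := fun t => (8 + t) ^ q - t ^ q with hg
  have hcont : ContinuousOn g (Set.Icc v 1) := by
    apply Continuous.continuousOn
    exact ((Real.continuous_rpow_const hq.le).comp (continuous_const.add continuous_id)).sub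
      (Real.continuous_rpow_const hq.le)
  have hderiv : ∀ t ∈ Set.Ioo v 1, HasDerivAt g
      (q * (8 + t) ^ (q - 1) - q * t ^ (q - 1)) t := by
    intro t ht
    have ht0 : (0:ℝ) < t := hv0.trans ht.1
    have h1 : HasDerivAt (fun t : ℝ => (8 + t) ^ q) (q * (8 + t) ^ (q - 1) * 1) t := by
      have := (Real.hasDerivAt_rpow_const (x := 8 + t) (p := q)
        (Or.inl (by linarith)))
      exact this.comp t ((hasDerivAt_id t).const_add 8)
    have h2 : HasDerivAt (fun t : ℝ => t ^ q) (q * t ^ (q - 1)) t :=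
      Real.hasDerivAt_rpow_const (Or.inl ht0.ne')
    have h3 := h1.sub h2
    rw [mul_one] at h3
    exact h3
  have hgv9 : g 1 = 9 ^ q - 1 := by
    simp [hg]
    norm_num
  rcases lt_or_gt_of_ne hq1 with hlt | hgt
  · -- 0 < q < 1 : g strictly decreasing
    have hmono : StrictAntiOn g (Set.Icc v 1) := by
      apply strictAntiOn_of_deriv_neg (convex_Icc v 1) hcont
      intro t ht
      rw [interior_Icc] at ht
      rw [HasDerivAt.deriv (hderiv t ht)]
      have ht0 : (0:ℝ) < t := hv0.trans ht.1
      have : (8 + t) ^ (q - 1) < t ^ (q - 1) :=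
        Real.rpow_lt_rpow_of_neg ht0 (by linarith) (by linarith)
      nlinarith
    have := hmono (Set.left_mem_Icc.2 (by linarith)) (Set.right_mem_Icc.2 (by linarith)) hv1
    rw [hgv9] at this
    exact ne_of_gt this
  · -- q > 1 : g strictly increasing
    have hmono : StrictMonoOn g (Set.Icc v 1) := by
      apply strictMonoOn_of_deriv_pos (convex_Icc v 1) hcont
      intro t ht
      rw [interior_Icc] at ht
      rw [HasDerivAt.deriv (hderiv t ht)]
      have ht0 : (0:ℝ) < t := hv0.trans ht.1
      have : t ^ (q - 1) < (8 + t) ^ (q - 1) :=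
        Real.rpow_lt_rpow ht0.le (by linarith) (by linarith)
      nlinarith
    have := hmono (Set.left_mem_Icc.2 (by linarith)) (Set.right_mem_Icc.2 (by linarith)) hv1
    rw [hgv9] at this
    exact ne_of_lt this

/-- For every real `p` with `1 < p` and `p ≠ 2`, the Lorentzian parallelogram
law fails for `x = (2,0)` and `y = (1, 1/4)`:
`8 + (1 − (1/4)^p)^(2/p) ≠ (3^p − (1/4)^p)^(2/p)`. -/
theorem lorentz_parallelogram_fails (p : ℝ) (hp : 1 < p) (hp2 : p ≠ 2) :
    8 + (1 - (1 / 4 : ℝ) ^ p) ^ (2 / p) ≠ ((3 : ℝ) ^ p - (1 / 4 : ℝ) ^ p) ^ (2 / p) := by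
  have hp0 : (0:ℝ) < p := by linarith
  set q : ℝ := p / 2 with hqdef
  have hq : 0 < q := by positivity
  have hq1 : q ≠ 1 := fun h => hp2 (by field_simp [hqdef] at h; linarith)
  -- facts about (1/4)^p
  have hd0 : (0:ℝ) < (1/4 : ℝ) ^ p := Real.rpow_pos_of_pos (by norm_num) p
  have hd1 : (1/4 : ℝ) ^ p < 1 := Real.rpow_lt_one (by norm_num) (by norm_num) hp0
  have h3d : (1/4 : ℝ) ^ p < (3:ℝ) ^ p := Real.rpow_lt_rpow (by norm_num) (by norm_num) hp0
  set v : ℝ := (1 - (1 / 4 : ℝ) ^ p) ^ (2 / p) with hvdef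
  have hv0 : 0 < v := Real.rpow_pos_of_pos (by linarith) _
  have hv1 : v < 1 := Real.rpow_lt_one (by linarith) (by linarith) (by positivity)
  intro heq
  -- raise both sides to the power q = p/2
  have hpq : 2 / p * q = 1 := by field_simp [hqdef]; linarith
  have hpow : ∀ x : ℝ, 0 ≤ x → (x ^ (2 / p)) ^ q = x := by
    intro x hx
    rw [← Real.rpow_mul hx, hpq, Real.rpow_one]
  have hvq : v ^ q = 1 - (1/4 : ℝ) ^ p := hpow _ (by linarith)
  have hwq : ((8 : ℝ) + v) ^ q = (3:ℝ) ^ p - (1/4 : ℝ) ^ p := by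
    rw [heq]; exact hpow _ (by linarith)
  have h9 : (9:ℝ) ^ q = (3:ℝ) ^ p := by
    have : (9:ℝ) = (3:ℝ) ^ (2:ℝ) := by
      rw [show (2:ℝ) = ((2:ℕ):ℝ) by norm_num, Real.rpow_natCast]; norm_num
    rw [this, ← Real.rpow_mul (by norm_num)]
    congr 1; ring
  exact lorentz_key q hq hq1 v hv0 hv1 (by rw [hvq, hwq, h9]; ring)
end

section
/- For the vectors x = (2,0) and y = (1, 1/4), the sign of the Lorentzian parallelogram defect is determined by p: for every real p with 1 < p < 2 one has 8 + (1 − (1/4)^p)^{2/p} > (3^p − (1/4)^p)^{2/p}, and for every real p > 2 one has 8 + (1 − (1/4)^p)^{2/p} < (3^p − (1/4)^p)^{2/p}. -/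
open Real

private lemma key_rw {p : ℝ} (hp : 0 < p) :
    ((3 : ℝ) ^ p - (1 / 4 : ℝ) ^ p) ^ (2 / p)
      = 9 * (1 - (1 / 12 : ℝ) ^ p) ^ (2 / p) := by
  have h3 : (0:ℝ) < 3 := by norm_num
  have hb1 : (1/12 : ℝ) ^ p < 1 :=
    rpow_lt_one (by norm_num) (by norm_num) hp
  have hb0 : (0:ℝ) < (1/12 : ℝ) ^ p := rpow_pos_of_pos (by norm_num) p
  have hsplit : (1/4 : ℝ) ^ p = 3 ^ p * (1/12 : ℝ) ^ p := by
    rw [← Real.mul_rpow (by norm_num) (by norm_num)]; norm_num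
  have h9 : ((3:ℝ) ^ p) ^ (2 / p) = 9 := by
    rw [← Real.rpow_mul (le_of_lt h3), mul_div_cancel₀ _ (ne_of_gt hp),
      show (2:ℝ) = ((2:ℕ):ℝ) by norm_num, Real.rpow_natCast]
    norm_num
  rw [hsplit, show (3:ℝ)^p * (1/12:ℝ)^p = 3^p * (1/12:ℝ)^p from rfl,
    ← mul_one_sub, Real.mul_rpow (by positivity) (by linarith), h9]

/-- For `x = (2,0)` and `y = (1, 1/4)`, the sign of the Lorentzian
parallelogram defect is determined by `p`: for `1 < p < 2` one has
`8 + (1 − (1/4)^p)^(2/p) > (3^p − (1/4)^p)^(2/p)`, and for `p > 2` one has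
`8 + (1 − (1/4)^p)^(2/p) < (3^p − (1/4)^p)^(2/p)`. -/
theorem lorentz_parallelogram_defect_sign :
    (∀ p : ℝ, 1 < p → p < 2 →
      8 + (1 - (1 / 4 : ℝ) ^ p) ^ (2 / p) > ((3 : ℝ) ^ p - (1 / 4 : ℝ) ^ p) ^ (2 / p)) ∧
    (∀ p : ℝ, 2 < p →
      8 + (1 - (1 / 4 : ℝ) ^ p) ^ (2 / p) < ((3 : ℝ) ^ p - (1 / 4 : ℝ) ^ p) ^ (2 / p)) := by
  constructor
  · intro p hp1 hp2
    have hp0 : (0:ℝ) < p := by linarith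
    rw [key_rw hp0]
    set a := (1/4 : ℝ) ^ p with ha_def
    set b := (1/12 : ℝ) ^ p with hb_def
    have ha0 : 0 < a := rpow_pos_of_pos (by norm_num) p
    have ha1 : a < 1 := rpow_lt_one (by norm_num) (by norm_num) hp0
    have hb0 : 0 < b := rpow_pos_of_pos (by norm_num) p
    have hb1 : b < 1 := rpow_lt_one (by norm_num) (by norm_num) hp0
    have hsplit : a = 3 ^ p * b := by
      rw [ha_def, hb_def, ← Real.mul_rpow (by norm_num) (by norm_num)]; norm_num
    have ht1 : 1 ≤ 2 / p := by
      rw [le_div_iff₀ hp0]; linarith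
    -- Bernoulli lower bound on (1-a)^(2/p)
    have hbern : 1 + (2/p) * (-a) ≤ (1 - a) ^ (2/p) := by
      have := one_add_mul_self_le_rpow_one_add (s := -a) (by linarith) ht1
      rwa [show (1:ℝ) + -a = 1 - a by ring] at this
    -- monotone bound on (1-b)^(2/p)
    have hmono : (1 - b) ^ (2/p) ≤ 1 - b := by
      have := rpow_le_rpow_of_exponent_ge (x := 1 - b) (by linarith) (by linarith) ht1
      rwa [Real.rpow_one] at this
    -- key numeric inequality 2*3^p < 9p
    have h3p : (3:ℝ) ^ p = 3 * 3 ^ (p - 1) := by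
      rw [show p = 1 + (p - 1) by ring, Real.rpow_add (by norm_num), Real.rpow_one]
      ring_nf
    have hber2 : (3:ℝ) ^ (p - 1) ≤ 1 + (p - 1) * 2 := by
      have := rpow_one_add_le_one_add_mul_self (s := (2:ℝ)) (by norm_num)
        (p := p - 1) (by linarith) (by linarith)
      norm_num at this
      linarith
    have h9p : 2 * (3:ℝ) ^ p < 9 * p := by
      rw [h3p]; nlinarith
    have hfrac : (2/p) * (3:ℝ) ^ p < 9 := by
      rw [div_mul_eq_mul_div, div_lt_iff₀ hp0]; linarith
    have hab : (2/p) * a < 9 * b := by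
      rw [hsplit, ← mul_assoc]
      exact (mul_lt_mul_iff_of_pos_right hb0).mpr hfrac
    nlinarith
  · intro p hp2
    have hp0 : (0:ℝ) < p := by linarith
    rw [key_rw hp0]
    set a := (1/4 : ℝ) ^ p with ha_def
    set b := (1/12 : ℝ) ^ p with hb_def
    have ha0 : 0 < a := rpow_pos_of_pos (by norm_num) p
    have ha1 : a < 1 := rpow_lt_one (by norm_num) (by norm_num) hp0
    have hb0 : 0 < b := rpow_pos_of_pos (by norm_num) p
    have hb1 : b < 1 := rpow_lt_one (by norm_num) (by norm_num) hp0
    have hsplit : a = 3 ^ p * b := by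
      rw [ha_def, hb_def, ← Real.mul_rpow (by norm_num) (by norm_num)]; norm_num
    have ht1 : 2 / p ≤ 1 := by
      rw [div_le_iff₀ hp0]; linarith
    have ht0 : 0 ≤ 2 / p := by positivity
    have hbern : (1 - a) ^ (2/p) ≤ 1 + (2/p) * (-a) := by
      have := rpow_one_add_le_one_add_mul_self (s := -a) (by linarith) ht0 ht1
      rwa [show (1:ℝ) + -a = 1 - a by ring] at this
    have hmono : 1 - b ≤ (1 - b) ^ (2/p) := by
      have := rpow_le_rpow_of_exponent_ge (x := 1 - b) (by linarith) (by linarith) ht1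
      rwa [Real.rpow_one] at this
    -- key numeric inequality 9p < 2*3^p
    have hlog3 : 1 < Real.log 3 := by
      rw [Real.lt_log_iff_exp_lt (by norm_num)]
      calc Real.exp 1 < 2.7182818286 := Real.exp_one_lt_d9
        _ < 3 := by norm_num
    have h3p : (3:ℝ) ^ p = 9 * 3 ^ (p - 2) := by
      rw [show p = 2 + (p - 2) by ring, Real.rpow_add (by norm_num),
        show (2:ℝ) = ((2:ℕ):ℝ) by norm_num, Real.rpow_natCast]
      norm_num
    have hexp : 1 + Real.log 3 * (p - 2) ≤ (3:ℝ) ^ (p - 2) := by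
      rw [Real.rpow_def_of_pos (by norm_num)]
      have := Real.add_one_le_exp (Real.log 3 * (p - 2))
      linarith
    have h9p : 9 * p < 2 * (3:ℝ) ^ p := by
      rw [h3p]
      nlinarith [mul_pos (by linarith : (0:ℝ) < Real.log 3 - 1) (by linarith : (0:ℝ) < p - 2)]
    have hfrac : (9:ℝ) < (2/p) * (3:ℝ) ^ p := by
      rw [div_mul_eq_mul_div, lt_div_iff₀ hp0]; linarith
    have hab : 9 * b < (2/p) * a := by
      rw [hsplit, ← mul_assoc]
      exact (mul_lt_mul_iff_of_pos_right hb0).mpr hfrac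
    nlinarith
end

section
/- For every real p > 2, the function λ ↦ (1 − (1−2λ)^p)^{2/p} / λ tends to +∞ as λ tends to 0 from the right. In particular, the function λ ↦ (1 − (1−2λ)^p)^{2/p} is not Lipschitz continuous on any right neighborhood of 0. -/
open Filter

lemma aux_tendsto (p : ℝ) (hp : 2 < p) :
    Tendsto (fun l : ℝ => (1 - (1 - 2 * l) ^ p) ^ (2 / p) / l)
        (nhdsWithin 0 (Set.Ioi 0)) atTop := by
  have hp0 : 0 < p := by linarith
  have h2p : 0 < 2 / p := by positivity
  have h2p1 : 2 / p < 1 := by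
    rw [div_lt_one hp0]; linarith
  -- g l = 2^(2/p) * (l^(1-2/p))⁻¹ tends to atTop
  have hbase : Tendsto (fun l : ℝ => l ^ (1 - 2 / p)) (nhdsWithin 0 (Set.Ioi 0))
      (nhdsWithin 0 (Set.Ioi 0)) := by
    rw [tendsto_nhdsWithin_iff]
    constructor
    · have := (Real.continuousAt_rpow_const 0 (1 - 2/p) (Or.inr (by linarith))).tendsto
      rw [Real.zero_rpow (by linarith : (1:ℝ) - 2/p ≠ 0)] at this
      exact this.mono_left nhdsWithin_le_nhds
    · filter_upwards [self_mem_nhdsWithin] with l hl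
      exact Real.rpow_pos_of_pos hl _
  have hinv : Tendsto (fun l : ℝ => (l ^ (1 - 2 / p))⁻¹) (nhdsWithin 0 (Set.Ioi 0)) atTop :=
    hbase.inv_tendsto_nhdsGT_zero
  have hg : Tendsto (fun l : ℝ => (2:ℝ) ^ (2 / p) * (l ^ (1 - 2 / p))⁻¹)
      (nhdsWithin 0 (Set.Ioi 0)) atTop :=
    hinv.const_mul_atTop (Real.rpow_pos_of_pos two_pos _)
  apply tendsto_atTop_mono' _ _ hg
  filter_upwards [Ioo_mem_nhdsGT_of_mem (Set.mem_Ico.2 ⟨le_refl (0:ℝ), one_half_pos⟩)]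
    with l hl
  obtain ⟨hl0, hl1⟩ := hl
  have h1 : (0:ℝ) < 1 - 2 * l := by linarith
  have h2 : (1 - 2 * l : ℝ) ≤ 1 := by linarith
  have key : 2 * l ≤ 1 - (1 - 2 * l) ^ p := by
    have : (1 - 2 * l : ℝ) ^ p ≤ (1 - 2 * l) ^ (1:ℝ) :=
      Real.rpow_le_rpow_of_exponent_ge h1 h2 (by linarith)
    rw [Real.rpow_one] at this
    linarith
  have h2l : (0:ℝ) < 2 * l := by linarith
  have hmono : (2 * l) ^ (2 / p) ≤ (1 - (1 - 2 * l) ^ p) ^ (2 / p) :=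
    Real.rpow_le_rpow h2l.le key h2p.le
  have hinveq : (l ^ (1 - 2 / p))⁻¹ = l ^ (2 / p) / l := by
    rw [← Real.rpow_neg hl0.le, neg_sub, Real.rpow_sub hl0, Real.rpow_one]
  calc (2:ℝ) ^ (2 / p) * (l ^ (1 - 2 / p))⁻¹
      = (2 * l) ^ (2 / p) / l := by
        rw [hinveq, Real.mul_rpow (by norm_num) hl0.le, mul_div_assoc]
    _ ≤ (1 - (1 - 2 * l) ^ p) ^ (2 / p) / l := by gcongr

/-- For every real `p > 2`, `λ ↦ (1 − (1−2λ)^p)^(2/p) / λ` tends to `+∞` as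
`λ → 0⁺`; in particular `λ ↦ (1 − (1−2λ)^p)^(2/p)` is not Lipschitz on any
right neighborhood of `0`. -/
theorem noldus_sq_not_lipschitz (p : ℝ) (hp : 2 < p) :
    Tendsto (fun l : ℝ => (1 - (1 - 2 * l) ^ p) ^ (2 / p) / l)
        (nhdsWithin 0 (Set.Ioi 0)) atTop ∧
      ∀ ε : ℝ, 0 < ε → ∀ K : NNReal,
        ¬ LipschitzOnWith K (fun l : ℝ => (1 - (1 - 2 * l) ^ p) ^ (2 / p))
          (Set.Ico 0 ε) := by
  have ht := aux_tendsto p hp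
  refine ⟨ht, fun ε hε K hK => ?_⟩
  have hev : ∀ᶠ l in nhdsWithin (0:ℝ) (Set.Ioi 0),
      (K:ℝ) < (1 - (1 - 2 * l) ^ p) ^ (2 / p) / l :=
    ht.eventually (eventually_gt_atTop _)
  have hmem : Set.Ioo (0:ℝ) ε ∈ nhdsWithin (0:ℝ) (Set.Ioi 0) :=
    Ioo_mem_nhdsGT_of_mem (Set.mem_Ico.2 ⟨le_refl _, hε⟩)
  obtain ⟨l, hKl, hl0, hlε⟩ := (hev.and (eventually_mem_set.mpr hmem)).exists
  have hf0 : (1 - (1 - 2 * (0:ℝ)) ^ p) ^ (2 / p) = 0 := by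
    norm_num
    exact Real.zero_rpow (by positivity)
  have hd := hK (Set.mem_Ico.2 ⟨hl0.le, hlε⟩) (Set.mem_Ico.2 ⟨le_refl _, hε⟩)
  rw [edist_dist, edist_dist] at hd
  have hd' : dist ((1 - (1 - 2 * l) ^ p) ^ (2 / p)) ((1 - (1 - 2 * 0) ^ p) ^ (2 / p))
      ≤ (K:ℝ) * dist l 0 := by
    have := hd
    rw [← ENNReal.ofReal_coe_nnreal, ← ENNReal.ofReal_mul (by positivity)] at this
    exact (ENNReal.ofReal_le_ofReal_iff (by positivity)).1 this
  rw [hf0, dist_zero_right, Real.dist_eq, sub_zero, abs_of_pos hl0] at hd'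
  have hle : (1 - (1 - 2 * l) ^ p) ^ (2 / p) ≤ (K:ℝ) * l :=
    le_trans (le_abs_self _) hd'
  have : (1 - (1 - 2 * l) ^ p) ^ (2 / p) / l ≤ (K:ℝ) := by
    rw [div_le_iff₀ hl0]; exact hle
  linarith
end

section
/- Fix a real p ≥ 1, and for real q ≥ 1 define S(q) := sup over φ ∈ (0,1) of |(1 − φ^p)^{1/p} − (1 − φ^q)^{1/q}|. Then S(q) tends to 0 as q tends to p within [1, ∞). In particular S(p) = 0, so the Lorentzian Gromov–Hausdorff distance between the cylinders Cyl^p and Cyl^q, which is bounded above by S(q)/2, tends to 0 as q → p. -/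
open Filter

/-- For `b ∈ (0,1]` and `r ≥ 1`, `b - b^r ≤ r - 1`. -/
lemma cyl_aux_sub (b r : ℝ) (hb0 : 0 < b) (hb1 : b ≤ 1) (hr : 1 ≤ r) :
    b - b ^ r ≤ r - 1 := by
  have hlog : -Real.log b ≤ b⁻¹ - 1 := by
    have := Real.log_le_sub_one_of_pos (x := b⁻¹) (by positivity)
    rwa [Real.log_inv] at this
  have h1 : 1 - b ^ (r - 1) ≤ -(r - 1) * Real.log b := by
    have hexp : Real.log b * (r - 1) + 1 ≤ Real.exp (Real.log b * (r - 1)) :=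
      Real.add_one_le_exp _
    rw [← Real.rpow_def_of_pos hb0] at hexp
    linarith
  have hfac : b - b ^ r = b * (1 - b ^ (r - 1)) := by
    have : b ^ r = b * b ^ (r - 1) := by
      rw [← Real.rpow_one_add' hb0.le (by intro h; linarith [hr, h])]
      ring_nf
    rw [this]; ring
  have hblog : -(b * Real.log b) ≤ 1 - b := by
    have := mul_le_mul_of_nonneg_left hlog hb0.le
    have hb' : b * b⁻¹ = 1 := mul_inv_cancel₀ hb0.ne'
    nlinarith
  have h2 : b * (1 - b ^ (r - 1)) ≤ (r - 1) * (-(b * Real.log b)) := by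
    have := mul_le_mul_of_nonneg_left h1 hb0.le
    nlinarith
  have h3 : (r - 1) * (-(b * Real.log b)) ≤ (r - 1) * 1 := by
    have h1b : -(b * Real.log b) ≤ 1 := by linarith [hb0]
    exact mul_le_mul_of_nonneg_left h1b (by linarith)
  linarith [hfac ▸ (h2.trans h3)]

/-- For `a ∈ (0,1]` and `0 < s ≤ t`, `a^s - a^t ≤ (t - s)/s`. -/
lemma cyl_aux_exp (a s t : ℝ) (ha0 : 0 < a) (ha1 : a ≤ 1) (hs : 0 < s) (hst : s ≤ t) :
    a ^ s - a ^ t ≤ (t - s) / s := by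
  have hc0 : 0 < a ^ s := Real.rpow_pos_of_pos ha0 s
  have hc1 : a ^ s ≤ 1 := Real.rpow_le_one ha0.le ha1 hs.le
  have hr : 1 ≤ t / s := (one_le_div hs).mpr hst
  have key : a ^ t = (a ^ s) ^ (t / s) := by
    rw [← Real.rpow_mul ha0.le]
    congr 1
    field_simp
  have := cyl_aux_sub (a ^ s) (t / s) hc0 hc1 hr
  rw [key]
  calc a ^ s - (a ^ s) ^ (t / s) ≤ t / s - 1 := this
    _ = (t - s) / s := by field_simp

/-- `a^t ≤ a^s` for `a ∈ (0,1]`, `s ≤ t`. -/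
lemma cyl_aux_mono (a s t : ℝ) (ha0 : 0 < a) (ha1 : a ≤ 1) (hst : s ≤ t) :
    a ^ t ≤ a ^ s :=
  Real.rpow_le_rpow_of_exponent_ge ha0 ha1 hst

/-- `|a^s - a^t| ≤ |s - t| / min s t` for `a ∈ (0,1]`, `0 < s`, `0 < t`. -/
lemma cyl_aux_abs (a s t : ℝ) (ha0 : 0 < a) (ha1 : a ≤ 1) (hs : 0 < s) (ht : 0 < t) :
    |a ^ s - a ^ t| ≤ |s - t| / min s t := by
  rcases le_total s t with h | h
  · rw [abs_of_nonneg (by linarith [cyl_aux_mono a s t ha0 ha1 h]),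
      abs_of_nonpos (by linarith), min_eq_left h, neg_sub]
    exact cyl_aux_exp a s t ha0 ha1 hs h
  · rw [abs_of_nonpos (by linarith [cyl_aux_mono a t s ha0 ha1 h]),
      abs_of_nonneg (by linarith), min_eq_right h, neg_sub]
    exact cyl_aux_exp a t s ha0 ha1 ht h

/-- `|a^r - b^r| ≤ |a - b|^r` for nonneg `a b` and `r ∈ (0,1]`. -/
lemma cyl_aux_hold (a b r : ℝ) (ha : 0 ≤ a) (hb : 0 ≤ b) (hr0 : 0 ≤ r) (hr1 : r ≤ 1) :
    |a ^ r - b ^ r| ≤ |a - b| ^ r := by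
  have key : ∀ x y : ℝ, 0 ≤ x → 0 ≤ y → y ≤ x → x ^ r - y ^ r ≤ (x - y) ^ r := by
    intro x y hx hy hyx
    have h := NNReal.rpow_add_le_add_rpow (x - y).toNNReal y.toNNReal hr0 hr1
    have hsum : (x - y).toNNReal + y.toNNReal = x.toNNReal := by
      rw [← Real.toNNReal_add (by linarith) hy]
      congr 1
      ring
    rw [hsum] at h
    have := (NNReal.coe_le_coe).mpr h
    push_cast [NNReal.coe_rpow, Real.coe_toNNReal _ hx, Real.coe_toNNReal _ hy,
      Real.coe_toNNReal _ (by linarith : (0:ℝ) ≤ x - y)] at this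
    linarith
  rcases le_total b a with h | h
  · rw [abs_of_nonneg (by linarith : (0:ℝ) ≤ a - b),
      abs_of_nonneg (sub_nonneg.mpr (Real.rpow_le_rpow hb h hr0))]
    exact key a b ha hb h
  · rw [abs_of_nonpos (by linarith : a - b ≤ 0),
      abs_of_nonpos (sub_nonpos.mpr (Real.rpow_le_rpow ha h hr0)), neg_sub, neg_sub]
    exact key b a hb ha h

/-- Fix `p ≥ 1` and set
`S q := sup_{φ ∈ (0,1)} |(1 − φ^p)^(1/p) − (1 − φ^q)^(1/q)|`.
Then `S q → 0` as `q → p` within `[1, ∞)`, and `S p = 0`. -/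
theorem cylinder_GH_continuous (p : ℝ) (hp : 1 ≤ p) :
    Tendsto
      (fun q : ℝ => sSup ((fun φ : ℝ =>
          |(1 - φ ^ p) ^ (1 / p) - (1 - φ ^ q) ^ (1 / q)|) '' Set.Ioo 0 1))
      (nhdsWithin p (Set.Ici 1)) (nhds 0) ∧
    sSup ((fun φ : ℝ =>
        |(1 - φ ^ p) ^ (1 / p) - (1 - φ ^ p) ^ (1 / p)|) '' Set.Ioo 0 1) = 0 := by
  have hp0 : 0 < p := by linarith
  constructor
  · -- the bounding function
    set c : ℝ := 1 / (p + 1) with hc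
    have hc0 : 0 < c := by positivity
    set g : ℝ → ℝ := fun q => |q - p| + |q - p| ^ c with hg
    -- key pointwise estimate
    have main : ∀ q : ℝ, 1 ≤ q → |q - p| ≤ 1 → ∀ φ : ℝ, φ ∈ Set.Ioo 0 1 →
        |(1 - φ ^ p) ^ (1 / p) - (1 - φ ^ q) ^ (1 / q)| ≤ g q := by
      intro q hq hqp φ hφ
      obtain ⟨hφ0, hφ1⟩ := hφ
      have hq0 : 0 < q := by linarith
      have hφp1 : φ ^ p < 1 := Real.rpow_lt_one hφ0.le hφ1 hp0
      have hφq1 : φ ^ q < 1 := Real.rpow_lt_one hφ0.le hφ1 hq0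
      have hφp0 : 0 < φ ^ p := Real.rpow_pos_of_pos hφ0 p
      have hφq0 : 0 < φ ^ q := Real.rpow_pos_of_pos hφ0 q
      set a : ℝ := 1 - φ ^ p with hadef
      set b : ℝ := 1 - φ ^ q with hbdef
      have ha0 : 0 < a := by simp [hadef]; linarith
      have ha1 : a ≤ 1 := by simp [hadef]; linarith
      have hb0 : 0 < b := by simp [hbdef]; linarith
      -- term 1 : |a^(1/p) - a^(1/q)| ≤ |q - p|
      have hterm1 : |a ^ (1 / p) - a ^ (1 / q)| ≤ |q - p| := by
        have := cyl_aux_abs a (1 / p) (1 / q) ha0 ha1 (by positivity) (by positivity)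
        have habs : |1 / p - 1 / q| = |q - p| / (p * q) := by
          rw [div_sub_div _ _ (ne_of_gt hp0) (ne_of_gt hq0), one_mul, mul_one, abs_div,
            abs_of_pos (by positivity : (0:ℝ) < p * q)]
        rcases le_total p q with h | h
        · have hmin : min (1 / p) (1 / q) = 1 / q :=
            min_eq_right (by apply one_div_le_one_div_of_le hp0 h)
          rw [hmin, habs] at this
          calc |a ^ (1 / p) - a ^ (1 / q)| ≤ |q - p| / (p * q) / (1 / q) := this
            _ = |q - p| / p := by field_simp
            _ ≤ |q - p| := by
                rw [div_le_iff₀ hp0]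
                nlinarith [abs_nonneg (q - p)]
        · have hmin : min (1 / p) (1 / q) = 1 / p :=
            min_eq_left (by apply one_div_le_one_div_of_le hq0 h)
          rw [hmin, habs] at this
          calc |a ^ (1 / p) - a ^ (1 / q)| ≤ |q - p| / (p * q) / (1 / p) := this
            _ = |q - p| / q := by field_simp
            _ ≤ |q - p| := by
                rw [div_le_iff₀ hq0]
                nlinarith [abs_nonneg (q - p)]
      -- |a - b| ≤ |q - p|
      have hab : |a - b| ≤ |q - p| := by
        have heq : a - b = φ ^ q - φ ^ p := by rw [hadef, hbdef]; ring
        rw [heq]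
        have := cyl_aux_abs φ q p hφ0 hφ1.le hq0 hp0
        have hmin : 1 ≤ min q p := le_min hq hp
        calc |φ ^ q - φ ^ p| ≤ |q - p| / min q p := this
          _ ≤ |q - p| := div_le_self (abs_nonneg _) hmin
      -- term 2 : |a^(1/q) - b^(1/q)| ≤ |q - p|^c
      have hterm2 : |a ^ (1 / q) - b ^ (1 / q)| ≤ |q - p| ^ c := by
        have h1 : |a ^ (1 / q) - b ^ (1 / q)| ≤ |a - b| ^ (1 / q) :=
          cyl_aux_hold a b (1 / q) ha0.le hb0.le (by positivity)
            ((div_le_one hq0).mpr hq)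
        have h2 : |a - b| ^ (1 / q) ≤ |q - p| ^ (1 / q) :=
          Real.rpow_le_rpow (abs_nonneg _) hab (by positivity)
        have h3 : |q - p| ^ (1 / q) ≤ |q - p| ^ c := by
          rcases eq_or_lt_of_le (abs_nonneg (q - p)) with h0 | h0
          · rw [← h0, Real.zero_rpow (one_div_pos.mpr hq0).ne', Real.zero_rpow hc0.ne']
          · apply Real.rpow_le_rpow_of_exponent_ge h0 hqp
            rw [hc]
            apply one_div_le_one_div_of_le hq0
            cases' abs_le.mp hqp with h1' h2'
            linarith
        linarith
      calc |a ^ (1 / p) - b ^ (1 / q)|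
          ≤ |a ^ (1 / p) - a ^ (1 / q)| + |a ^ (1 / q) - b ^ (1 / q)| := abs_sub_le _ _ _
        _ ≤ |q - p| + |q - p| ^ c := add_le_add hterm1 hterm2
        _ = g q := rfl
    -- g → 0
    have hgtendsto : Tendsto g (nhdsWithin p (Set.Ici 1)) (nhds 0) := by
      have habs : Tendsto (fun q : ℝ => |q - p|) (nhdsWithin p (Set.Ici 1)) (nhds 0) := by
        have : Tendsto (fun q : ℝ => |q - p|) (nhds p) (nhds 0) := by
          have : ContinuousAt (fun q : ℝ => |q - p|) p := by fun_prop
          simpa using this.tendsto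
        exact this.mono_left nhdsWithin_le_nhds
      have hrp : Tendsto (fun q : ℝ => |q - p| ^ c) (nhdsWithin p (Set.Ici 1)) (nhds 0) := by
        have hcont : ContinuousAt (fun x : ℝ => x ^ c) 0 :=
          Real.continuousAt_rpow_const 0 c (Or.inr hc0.le)
        have := hcont.tendsto.comp habs
        simpa [Real.zero_rpow hc0.ne', Function.comp_def] using this
      have := habs.add hrp
      simpa [hg] using this
    -- squeeze
    have hev : ∀ᶠ q in nhdsWithin p (Set.Ici 1), 1 ≤ q ∧ |q - p| ≤ 1 := by
      have h1 : ∀ᶠ q in nhdsWithin p (Set.Ici 1), 1 ≤ q :=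
        eventually_mem_nhdsWithin.mono fun q hq => hq
      have h2 : ∀ᶠ q in nhdsWithin p (Set.Ici 1), |q - p| ≤ 1 := by
        have : ∀ᶠ q in nhds p, |q - p| ≤ 1 := by
          have : ∀ᶠ q in nhds p, dist q p ≤ 1 :=
            eventually_nhds_iff.mpr ⟨Metric.ball p 1, fun y hy => le_of_lt hy,
              Metric.isOpen_ball, Metric.mem_ball_self one_pos⟩
          simpa [Real.dist_eq] using this
        exact this.filter_mono nhdsWithin_le_nhds
      exact h1.and h2
    apply tendsto_of_tendsto_of_tendsto_of_le_of_le' tendsto_const_nhds hgtendsto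
    · -- 0 ≤ S q
      filter_upwards with q
      apply Real.sSup_nonneg
      rintro x ⟨φ, _, rfl⟩
      exact abs_nonneg _
    · -- S q ≤ g q
      filter_upwards [hev] with q ⟨hq, hqp⟩
      apply Real.sSup_le
      · rintro x ⟨φ, hφ, rfl⟩
        exact main q hq hqp φ hφ
      · have : (0:ℝ) ≤ |q - p| ^ c := Real.rpow_nonneg (abs_nonneg _) c
        have : (0:ℝ) ≤ |q - p| := abs_nonneg _
        positivity
  · have himg : (fun φ : ℝ =>
        |(1 - φ ^ p) ^ (1 / p) - (1 - φ ^ p) ^ (1 / p)|) '' Set.Ioo 0 1 = {0} := by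
      have : (fun φ : ℝ =>
          |(1 - φ ^ p) ^ (1 / p) - (1 - φ ^ p) ^ (1 / p)|) = fun _ => (0:ℝ) := by
        funext φ; simp
      rw [this]
      exact Set.Nonempty.image_const ⟨1/2, by norm_num⟩ 0
    rw [himg, csSup_singleton]
end

section
/- Let p and d be real numbers with p ≥ 1, d > 0 and d > p. Then the sequence v(n) := n · ((1/(2n) + 1/2)^p − (1/2 − 1/(2n))^p)^{d/p}, indexed by positive natural numbers n, tends to 0 as n → ∞. -/
open Filter Real

/-- For real `p ≥ 1`, `d > 0` with `d > p`, the Hausdorff-content sums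
`v(n) = n · ((1/(2n) + 1/2)^p − (1/2 − 1/(2n))^p)^(d/p)` tend to `0`. -/
theorem tilted_diamond_content_tendsto_zero (p d : ℝ) (hp : 1 ≤ p)
    (hd : 0 < d) (hdp : p < d) :
    Tendsto (fun n : ℕ => (n : ℝ) *
        ((1 / (2 * (n : ℝ)) + 1 / 2) ^ p - (1 / 2 - 1 / (2 * (n : ℝ))) ^ p) ^ (d / p))
      atTop (nhds 0) := by
  have hp0 : 0 < p := lt_of_lt_of_le one_pos hp
  have hdp1 : 1 < d / p := (one_lt_div hp0).mpr hdp
  have hexp : 0 < d / p - 1 := by linarith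
  -- the majorant tends to 0
  have hlim : Tendsto (fun n : ℕ => p ^ (d / p) * (n : ℝ) ^ (1 - d / p)) atTop (nhds 0) := by
    have h1 : Tendsto (fun x : ℝ => x ^ (-(d / p - 1))) atTop (nhds 0) :=
      tendsto_rpow_neg_atTop hexp
    have h2 := ((h1.comp tendsto_natCast_atTop_atTop).const_mul (p ^ (d / p)))
    rw [mul_zero] at h2
    convert h2 using 2 with n
    rw [Function.comp_apply, neg_sub]
  apply tendsto_of_tendsto_of_tendsto_of_le_of_le' tendsto_const_nhds hlim
  · -- lower bound 0
    filter_upwards [eventually_ge_atTop 1] with n hn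
    have hx1 : (1 : ℝ) ≤ (n : ℝ) := by exact_mod_cast hn
    have hx0 : (0 : ℝ) < (n : ℝ) := by linarith
    have hb0 : (0 : ℝ) ≤ 1 / 2 - 1 / (2 * (n : ℝ)) := by
      have : 1 / (2 * (n : ℝ)) ≤ 1 / 2 := by
        apply one_div_le_one_div_of_le <;> linarith
      linarith
    have hab : 1 / 2 - 1 / (2 * (n : ℝ)) ≤ 1 / (2 * (n : ℝ)) + 1 / 2 := by
      have : 0 < 1 / (2 * (n : ℝ)) := by positivity
      linarith
    have hbr : (0 : ℝ) ≤ (1 / (2 * (n : ℝ)) + 1 / 2) ^ p - (1 / 2 - 1 / (2 * (n : ℝ))) ^ p :=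
      sub_nonneg.mpr (Real.rpow_le_rpow hb0 hab hp0.le)
    positivity
  · -- upper bound
    filter_upwards [eventually_ge_atTop 1] with n hn
    have hx1 : (1 : ℝ) ≤ (n : ℝ) := by exact_mod_cast hn
    have hx0 : (0 : ℝ) < (n : ℝ) := by linarith
    set x : ℝ := (n : ℝ)
    set a : ℝ := 1 / (2 * x) + 1 / 2 with ha_def
    set b : ℝ := 1 / 2 - 1 / (2 * x) with hb_def
    have ha0 : 0 < a := by
      have h : 0 < 1 / (2 * x) := by positivity
      unfold a; linarith
    have ha1 : a ≤ 1 := by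
      have h2 : 1 / (2 * x) ≤ 1 / 2 := by
        apply one_div_le_one_div_of_le <;> linarith
      unfold a; linarith
    have hb0 : 0 ≤ b := by
      have h2 : 1 / (2 * x) ≤ 1 / 2 := by
        apply one_div_le_one_div_of_le <;> linarith
      unfold b; linarith
    have hab : b ≤ a := by
      have : 0 < 1 / (2 * x) := by positivity
      unfold a b; linarith
    have hbr0 : (0 : ℝ) ≤ a ^ p - b ^ p :=
      sub_nonneg.mpr (Real.rpow_le_rpow hb0 hab hp0.le)
    -- key bound: a^p - b^p ≤ p / x
    have hax : 1 / x ≤ a := by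
      have h2 : 1 / (2 * x) ≥ 1 / (2 * x) := le_refl _
      have h3 : 1 / x = 1 / (2 * x) + 1 / (2 * x) := by field_simp; ring
      have h4 : 1 / (2 * x) ≤ 1 / 2 := by
        apply one_div_le_one_div_of_le <;> linarith
      rw [h3]; unfold a; linarith
    set t : ℝ := 1 / (a * x) with ht_def
    have ht0 : 0 < t := by positivity
    have ht1 : t ≤ 1 := by
      rw [ht_def]
      rw [div_le_one (by positivity)]
      calc (1:ℝ) = (1 / x) * x := by field_simp
        _ ≤ a * x := by apply mul_le_mul_of_nonneg_right hax hx0.le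
    have hbern : 1 + p * (-t) ≤ (1 + (-t)) ^ p :=
      one_add_mul_self_le_rpow_one_add (by linarith) hp
    have hb_eq : b = a * (1 - t) := by
      have : a * t = 1 / x := by
        rw [ht_def]; field_simp
      have h2 : a * (1 - t) = a - a * t := by ring
      rw [h2, this]
      unfold a b
      field_simp
      ring
    have hbp : a ^ p * (1 - p * t) ≤ b ^ p := by
      rw [hb_eq, Real.mul_rpow ha0.le (by linarith)]
      have := mul_le_mul_of_nonneg_left hbern (Real.rpow_nonneg ha0.le p)
      calc a ^ p * (1 - p * t) = a ^ p * (1 + p * (-t)) := by ring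
        _ ≤ a ^ p * (1 + (-t)) ^ p := this
        _ = a ^ p * (1 - t) ^ p := by ring_nf
    have hkey : a ^ p - b ^ p ≤ p / x := by
      have h1 : a ^ p - b ^ p ≤ a ^ p * (p * t) := by nlinarith [hbp]
      have h2 : a ^ p * t = a ^ (p - 1) / x := by
        rw [ht_def, Real.rpow_sub ha0, Real.rpow_one]
        field_simp
      have h3 : a ^ (p - 1) ≤ 1 := Real.rpow_le_one ha0.le ha1 (by linarith)
      have h4 : a ^ p * (p * t) = p * (a ^ (p-1) / x) := by
        rw [← h2]; ring
      rw [h4] at h1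
      calc a ^ p - b ^ p ≤ p * (a ^ (p-1) / x) := h1
        _ ≤ p * (1 / x) := by gcongr
        _ = p / x := by ring
    calc x * (a ^ p - b ^ p) ^ (d / p)
        ≤ x * (p / x) ^ (d / p) := by
          apply mul_le_mul_of_nonneg_left _ hx0.le
          exact Real.rpow_le_rpow hbr0 hkey (by positivity)
      _ = p ^ (d / p) * x ^ (1 - d / p) := by
          rw [Real.div_rpow hp0.le hx0.le, Real.rpow_sub hx0, Real.rpow_one]
          field_simp
end

section
/- Let p and d be real numbers with p ≥ 1, d > 0 and d < p. Then the sequence v(n) := n · ((1/(2n) + 1/2)^p − (1/2 − 1/(2n))^p)^{d/p}, indexed by positive natural numbers n, tends to +∞ as n → ∞. -/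
open Filter

/-- For real `p ≥ 1`, `d > 0` with `d < p`, the Hausdorff-content sums
`v(n) = n · ((1/(2n) + 1/2)^p − (1/2 − 1/(2n))^p)^(d/p)` tend to `+∞`. -/
theorem tilted_diamond_content_tendsto_atTop (p d : ℝ) (hp : 1 ≤ p)
    (hd : 0 < d) (hdp : d < p) :
    Tendsto (fun n : ℕ => (n : ℝ) *
        ((1 / (2 * (n : ℝ)) + 1 / 2) ^ p - (1 / 2 - 1 / (2 * (n : ℝ))) ^ p) ^ (d / p))
      atTop atTop := by
  have hp0 : (0:ℝ) < p := lt_of_lt_of_le one_pos hp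
  have hdp1 : d / p < 1 := (div_lt_one hp0).mpr hdp
  have hdp0 : 0 < d / p := div_pos hd hp0
  -- the comparison sequence
  have hlim : Tendsto (fun n : ℕ => (1/2:ℝ) ^ d * (n : ℝ) ^ (1 - d / p)) atTop atTop := by
    apply Tendsto.const_mul_atTop (Real.rpow_pos_of_pos (by norm_num) d)
    exact (tendsto_rpow_atTop (by linarith)).comp tendsto_natCast_atTop_atTop
  apply tendsto_atTop_mono' _ _ hlim
  filter_upwards [eventually_ge_atTop 1] with n hn
  have hn0 : (0:ℝ) < (n:ℝ) := by exact_mod_cast Nat.lt_of_lt_of_le Nat.zero_lt_one hn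
  set x : ℝ := 1 / (2 * (n:ℝ)) with hx
  have hx0 : 0 < x := by positivity
  have hx2 : x ≤ 1/2 := by
    rw [hx, div_le_div_iff₀ (by positivity) (by norm_num)]
    nlinarith [hn0, (by exact_mod_cast hn : (1:ℝ) ≤ (n:ℝ))]
  -- key lower bound on the bracket
  have key : (1/2:ℝ) ^ p * (1 / (n:ℝ)) ≤ (x + 1/2) ^ p - (1/2 - x) ^ p := by
    have h1 : (1/2 - x) ^ p ≤ (1/2:ℝ) ^ p :=
      Real.rpow_le_rpow (by linarith) (by linarith) hp0.le
    have h2 : (1/2:ℝ) ^ p * (1 + p * (2 * x)) ≤ (x + 1/2) ^ p := by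
      have : (x + 1/2 : ℝ) = (1/2) * (1 + 2 * x) := by ring
      rw [this, Real.mul_rpow (by norm_num) (by linarith)]
      refine mul_le_mul_of_nonneg_left ?_ (by positivity)
      have := one_add_mul_self_le_rpow_one_add (s := 2 * x) (by linarith) hp
      linarith
    have h3 : (1/2:ℝ) ^ p * (1 / (n:ℝ)) ≤ (1/2:ℝ) ^ p * (p * (2 * x)) := by
      refine mul_le_mul_of_nonneg_left ?_ (by positivity)
      have hx' : 2 * x = 1 / (n:ℝ) := by rw [hx]; field_simp
      rw [hx']
      nlinarith [div_pos one_pos hn0]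
    nlinarith [Real.rpow_pos_of_pos (show (0:ℝ) < 1/2 by norm_num) p]
  have hbr0 : (0:ℝ) < (1/2:ℝ) ^ p * (1 / (n:ℝ)) := by positivity
  have hmono : ((1/2:ℝ) ^ p * (1 / (n:ℝ))) ^ (d/p) ≤
      ((x + 1/2) ^ p - (1/2 - x) ^ p) ^ (d/p) :=
    Real.rpow_le_rpow hbr0.le key hdp0.le
  have hval : (n:ℝ) * ((1/2:ℝ) ^ p * (1 / (n:ℝ))) ^ (d/p)
      = (1/2:ℝ) ^ d * (n:ℝ) ^ (1 - d / p) := by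
    have e1 : ((1/2:ℝ) ^ p) ^ (d/p) = (1/2:ℝ) ^ d := by
      rw [← Real.rpow_mul (by norm_num : (0:ℝ) ≤ 1/2)]
      congr 1; field_simp
    have e2 : (1 / (n:ℝ)) ^ (d/p) = (n:ℝ) ^ (-(d/p)) := by
      rw [one_div, ← Real.rpow_neg_one (n:ℝ), ← Real.rpow_mul hn0.le]
      norm_num
    rw [Real.mul_rpow (by positivity) (by positivity), e1, e2,
      show (1 - d/p) = 1 + (-(d/p)) by ring, Real.rpow_add hn0, Real.rpow_one]
    ring
  calc (1/2:ℝ) ^ d * (n:ℝ) ^ (1 - d / p)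
      = (n:ℝ) * ((1/2:ℝ) ^ p * (1 / (n:ℝ))) ^ (d/p) := hval.symm
    _ ≤ (n:ℝ) * ((x + 1/2) ^ p - (1/2 - x) ^ p) ^ (d/p) :=
        mul_le_mul_of_nonneg_left hmono hn0.le
    _ = (n:ℝ) * ((1 / (2 * (n:ℝ)) + 1/2) ^ p - (1/2 - 1 / (2 * (n:ℝ))) ^ p) ^ (d/p) := by
        rw [hx]
end

section
/- Let k > 0 and let ab, ac, bc > 0 be real numbers satisfying the strict triangle inequality bc < ab + ac (so that 2(ab² + ac²) − bc² > 0). Define, for small λ > 0, g(λ) := (1/√k) · arccos((cos(ab·√k·λ) + cos(ac·√k·λ)) / (2·cos(bc·√k·λ/2))), the distance in the sphere of curvature k from the vertex ā to the midpoint of the opposite side in a comparison triangle with side lengths λ·ab, λ·ac, λ·bc. Then the ratio (g(λ) − λ·√(2ab² + 2ac² − bc²)/2) / λ³ tends to −(k/48) · (ab − ac − bc)(ab + ac − bc)(ab − ac + bc)(ab + ac + bc) / √(2(ab² + ac²) − bc²) as λ tends to 0 from the right. In particular, the deviation of the spherical median length from the flat (Euclidean) median length √(2ab² + 2ac² − bc²)/2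 scaled by λ is of order λ³, not λ². -/
open Filter

open Real Topology

lemma tendsto_mul_nhdsNE (α : ℝ) (hα : α ≠ 0) :
    Tendsto (fun l : ℝ => α * l) (𝓝[>] 0) (𝓝[≠] (0:ℝ)) := by
  apply tendsto_nhdsWithin_of_tendsto_nhds_of_eventually_within
  · have h : Tendsto (fun l : ℝ => α * l) (𝓝 (0:ℝ)) (𝓝 (α * 0)) :=
      (continuous_const.mul continuous_id).tendsto 0
    simpa using h.mono_left nhdsWithin_le_nhds
  · filter_upwards [self_mem_nhdsWithin] with l hl
    exact mul_ne_zero hα (ne_of_gt hl)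

lemma half_nhdsNE :
    Tendsto (fun t : ℝ => t / 2) (𝓝[≠] (0:ℝ)) (𝓝[≠] (0:ℝ)) := by
  apply tendsto_nhdsWithin_of_tendsto_nhds_of_eventually_within
  · have h : Tendsto (fun t : ℝ => t / 2) (𝓝 (0:ℝ)) (𝓝 ((0:ℝ) / 2)) :=
      (continuous_id.div_const 2).tendsto 0
    simpa using h.mono_left nhdsWithin_le_nhds
  · filter_upwards [self_mem_nhdsWithin] with t ht
    exact div_ne_zero ht two_ne_zero

lemma H1 : Tendsto (fun x : ℝ => Real.sin x / x) (𝓝[≠] (0:ℝ)) (𝓝 1) := by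
  have h := Real.hasDerivAt_sin 0
  rw [Real.cos_zero] at h
  have h2 := hasDerivAt_iff_tendsto_slope.mp h
  apply h2.congr
  intro x
  simp [slope_def_field, Real.sin_zero]

lemma H2 : Tendsto (fun x : ℝ => (x - Real.sin x) / x ^ 3) (𝓝[≠] (0:ℝ)) (𝓝 (1/6)) := by
  have h : Tendsto (fun x : ℝ => (x - Real.sin x) / x ^ 3 - 1/6) (𝓝[≠] (0:ℝ)) (𝓝 0) := by
    apply squeeze_zero_norm' (a := fun x : ℝ => |x| * (5/96))
    · have hmem : ∀ᶠ x : ℝ in 𝓝[≠] (0:ℝ), |x| ≤ 1 ∧ x ≠ 0 := by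
        have h1 : ∀ᶠ x : ℝ in 𝓝 (0:ℝ), |x| ≤ 1 := by
          filter_upwards [Metric.closedBall_mem_nhds (0:ℝ) one_pos] with x hx
          simpa [Real.dist_eq] using hx
        filter_upwards [h1.filter_mono nhdsWithin_le_nhds, self_mem_nhdsWithin] with x hx hx0
        exact ⟨hx, hx0⟩
      filter_upwards [hmem] with x hx
      obtain ⟨hx1, hx0⟩ := hx
      have hb := Real.sin_bound hx1
      have heq : (x - Real.sin x) / x ^ 3 - 1/6 = -((Real.sin x - (x - x^3/6)) / x ^ 3) := by
        field_simp
        ring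
      have hx3 : (0:ℝ) < |x| ^ 3 := by positivity
      rw [heq, Real.norm_eq_abs, abs_neg, abs_div, abs_pow]
      rw [div_le_iff₀ hx3]
      calc |Real.sin x - (x - x^3/6)| ≤ |x| ^ 4 * (5/96) := by
            have h4 : 0 ≤ |x| ^ 4 := by positivity
            have h5 : |x| ^ 5 ≤ |x| ^ 4 := by
              rw [pow_succ]; exact mul_le_of_le_one_right h4 hx1
            linarith only [hb, h5, h4]
        _ = |x| * (5/96) * |x| ^ 3 := by ring
    · have : Tendsto (fun x : ℝ => |x| * (5/96)) (𝓝 (0:ℝ)) (𝓝 (|0| * (5/96))) :=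
        (continuous_abs.tendsto 0).mul_const _
      simpa using this.mono_left nhdsWithin_le_nhds
  have := h.add_const (1/6 : ℝ)
  simpa using this

lemma cos_from_half (t : ℝ) : Real.cos t = 1 - 2 * Real.sin (t/2) ^ 2 := by
  have h := Real.sin_sq_eq_half_sub (t/2)
  rw [show 2 * (t/2) = t by ring] at h
  linarith

lemma H3 : Tendsto (fun t : ℝ => (Real.cos t - 1 + t ^ 2 / 2) / t ^ 4) (𝓝[≠] (0:ℝ))
    (𝓝 (1/24)) := by
  have h2 := H2.comp half_nhdsNE
  have h1 := H1.comp half_nhdsNE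
  have hmain := ((h2.const_mul 2).mul (h1.const_add 1)).div_const 16
  have hval : (2 * (1/6) * (1 + 1) / 16 : ℝ) = 1/24 := by norm_num
  rw [← hval]
  apply hmain.congr'
  filter_upwards [self_mem_nhdsWithin] with t ht
  have ht : t ≠ 0 := ht
  have hcos := cos_from_half t
  simp only [Function.comp]
  rw [hcos]
  field_simp
  ring

lemma H4 (α : ℝ) : Tendsto (fun l : ℝ => (Real.cos (α * l) - 1 + α ^ 2 * l ^ 2 / 2) / l ^ 4)
    (𝓝[>] (0:ℝ)) (𝓝 (α ^ 4 / 24)) := by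
  rcases eq_or_ne α 0 with rfl | hα
  · simpa using tendsto_const_nhds (α := ℝ) (f := 𝓝[>] (0:ℝ)) (a := (0:ℝ))
  · have h := (H3.comp (tendsto_mul_nhdsNE α hα)).const_mul (α ^ 4)
    rw [show α ^ 4 * (1/24) = α ^ 4 / 24 by ring] at h
    apply h.congr'
    filter_upwards [self_mem_nhdsWithin] with l hl
    have hl : (0:ℝ) < l := hl
    simp only [Function.comp]
    field_simp

lemma H5 (α : ℝ) : Tendsto (fun l : ℝ => (1 - Real.cos (α * l)) / l ^ 2)
    (𝓝[>] (0:ℝ)) (𝓝 (α ^ 2 / 2)) := by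
  rcases eq_or_ne α 0 with rfl | hα
  · simpa using tendsto_const_nhds (α := ℝ) (f := 𝓝[>] (0:ℝ)) (a := (0:ℝ))
  · have hmap : Tendsto (fun l : ℝ => α / 2 * l) (𝓝[>] (0:ℝ)) (𝓝[≠] (0:ℝ)) :=
      tendsto_mul_nhdsNE (α / 2) (by simpa using hα)
    have h := ((H1.comp hmap).mul (H1.comp hmap)).const_mul (α ^ 2 / 2)
    rw [show α ^ 2 / 2 * (1 * 1) = α ^ 2 / 2 by ring] at h
    apply h.congr'
    filter_upwards [self_mem_nhdsWithin] with l hl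
    have hl : (0:ℝ) < l := hl
    have hcos := cos_from_half (α * l)
    simp only [Function.comp]
    rw [hcos, show α * l / 2 = α / 2 * l by ring]
    field_simp
    ring

lemma H6 {x y : ℝ} (hx0 : 0 ≤ x) (hx1 : x ≤ 1/2) (hy0 : 0 ≤ y) (hy1 : y ≤ 1/2) :
    |(Real.arcsin x - x) - (Real.arcsin y - y)| ≤ (x + y) ^ 2 * |x - y| := by
  have hsub : Set.uIcc y x ⊆ Set.Icc 0 (1/2) :=
    Set.uIcc_subset_Icc ⟨hy0, hy1⟩ ⟨hx0, hx1⟩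
  have hderiv : ∀ t ∈ Set.uIcc y x,
      HasDerivWithinAt (fun s => Real.arcsin s - s)
        (1 / Real.sqrt (1 - t ^ 2) - 1) (Set.uIcc y x) t := by
    intro t ht
    obtain ⟨ht0, ht1⟩ := hsub ht
    have h1 : t ≠ -1 := by intro h; rw [h] at ht0; norm_num at ht0
    have h2 : t ≠ 1 := by intro h; rw [h] at ht1; norm_num at ht1
    exact ((Real.hasDerivAt_arcsin h1 h2).sub (hasDerivAt_id t)).hasDerivWithinAt
  have hbound : ∀ t ∈ Set.uIcc y x, ‖1 / Real.sqrt (1 - t ^ 2) - 1‖ ≤ (x + y) ^ 2 := by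
    intro t ht
    obtain ⟨ht0, ht1⟩ := hsub ht
    have hpos : (0:ℝ) < 1 - t ^ 2 := by nlinarith
    have hs_pos : 0 < Real.sqrt (1 - t ^ 2) := Real.sqrt_pos.mpr hpos
    have hle1 : Real.sqrt (1 - t ^ 2) ≤ 1 := Real.sqrt_le_one.mpr (by nlinarith)
    have hnonneg : 0 ≤ 1 / Real.sqrt (1 - t ^ 2) - 1 := by
      rw [sub_nonneg, le_div_iff₀ hs_pos, one_mul]
      exact hle1
    have hlow : 1 / (1 + t ^ 2) ≤ Real.sqrt (1 - t ^ 2) := by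
      have h' : (1 / (1 + t ^ 2)) ^ 2 ≤ 1 - t ^ 2 := by
        rw [div_pow, one_pow, div_le_iff₀ (by positivity)]
        have ht2 : t ^ 2 ≤ 1/4 := by nlinarith
        nlinarith [sq_nonneg t, sq_nonneg (t ^ 2)]
      calc 1 / (1 + t ^ 2) = Real.sqrt ((1 / (1 + t ^ 2)) ^ 2) :=
            (Real.sqrt_sq (by positivity)).symm
        _ ≤ Real.sqrt (1 - t ^ 2) := Real.sqrt_le_sqrt h'
    have hup : 1 / Real.sqrt (1 - t ^ 2) ≤ 1 + t ^ 2 := by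
      rw [div_le_iff₀ hs_pos]
      calc (1:ℝ) = (1 / (1 + t ^ 2)) * (1 + t ^ 2) := by field_simp
        _ ≤ Real.sqrt (1 - t ^ 2) * (1 + t ^ 2) := by
            apply mul_le_mul_of_nonneg_right hlow (by positivity)
        _ = (1 + t ^ 2) * Real.sqrt (1 - t ^ 2) := by ring
    have ht_le : t ≤ x + y := by
      rcases Set.mem_uIcc.mp ht with ⟨_, h⟩ | ⟨_, h⟩ <;> linarith
    rw [Real.norm_eq_abs, abs_of_nonneg hnonneg]
    nlinarith
  have key := Convex.norm_image_sub_le_of_norm_hasDerivWithin_le hderiv hbound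
    (convex_uIcc y x) Set.left_mem_uIcc Set.right_mem_uIcc
  simpa [Real.norm_eq_abs] using key

set_option maxHeartbeats 1000000

/-- The spherical comparison median deviates from the Euclidean median at
order `λ³`: with `g(λ)` the distance from the vertex to the midpoint of the
opposite side in a comparison triangle of side lengths `λ·ab, λ·ac, λ·bc` in
the sphere of curvature `k > 0`, the ratio
`(g(λ) − λ·√(2ab² + 2ac² − bc²)/2) / λ³` tends to
`−(k/48)·(ab−ac−bc)(ab+ac−bc)(ab−ac+bc)(ab+ac+bc)/√(2(ab²+ac²)−bc²)`
as `λ → 0⁺`. -/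
theorem spherical_median_third_order (k ab ac bc : ℝ) (hk : 0 < k)
    (hab : 0 < ab) (hac : 0 < ac) (hbc : 0 < bc) (htri : bc < ab + ac) :
    Tendsto
      (fun l : ℝ =>
        ((1 / Real.sqrt k) * Real.arccos
            ((Real.cos (ab * Real.sqrt k * l) + Real.cos (ac * Real.sqrt k * l)) /
              (2 * Real.cos (bc * Real.sqrt k * l / 2)))
          - l * Real.sqrt (2 * ab ^ 2 + 2 * ac ^ 2 - bc ^ 2) / 2) / l ^ 3)
      (nhdsWithin 0 (Set.Ioi 0))
      (nhds (-(k / 48) * ((ab - ac - bc) * (ab + ac - bc) * (ab - ac + bc) *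
          (ab + ac + bc)) / Real.sqrt (2 * (ab ^ 2 + ac ^ 2) - bc ^ 2))) := by
  rw [show 2 * (ab ^ 2 + ac ^ 2) - bc ^ 2 = 2 * ab ^ 2 + 2 * ac ^ 2 - bc ^ 2 by ring]
  have hS0 : (0:ℝ) < 2 * ab ^ 2 + 2 * ac ^ 2 - bc ^ 2 := by nlinarith [sq_nonneg (ab - ac)]
  set sk := Real.sqrt k with hsk_def
  have hsk : 0 < sk := Real.sqrt_pos.mpr hk
  have hsk2 : sk ^ 2 = k := Real.sq_sqrt hk.le
  set S := Real.sqrt (2 * ab ^ 2 + 2 * ac ^ 2 - bc ^ 2) with hS_def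
  have hS : 0 < S := Real.sqrt_pos.mpr hS0
  have hS2 : S ^ 2 = 2 * ab ^ 2 + 2 * ac ^ 2 - bc ^ 2 := Real.sq_sqrt hS0.le
  set a := ab * sk with ha_def
  set b := ac * sk with hb_def
  set c := bc * sk with hc_def
  set p := sk * S / 2 with hp_def
  have hp : 0 < p := div_pos (mul_pos hsk hS) two_pos
  have ha2 : a ^ 2 = ab ^ 2 * k := by rw [ha_def, mul_pow, hsk2]
  have hb2 : b ^ 2 = ac ^ 2 * k := by rw [hb_def, mul_pow, hsk2]
  have hc2 : c ^ 2 = bc ^ 2 * k := by rw [hc_def, mul_pow, hsk2]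
  have hp2 : p ^ 2 = k * (2 * ab ^ 2 + 2 * ac ^ 2 - bc ^ 2) / 4 := by
    rw [hp_def, div_pow, mul_pow, hsk2, hS2]; ring
  have hquad : (c/2 + p) ^ 2 + (c/2 - p) ^ 2 - a ^ 2 - b ^ 2 = 0 := by
    linear_combination (1/2) * hc2 + 2 * hp2 - ha2 - hb2
  set u : ℝ → ℝ := fun l => (Real.cos (a * l) + Real.cos (b * l)) / (2 * Real.cos (c * l / 2))
    with hu_def
  set x : ℝ → ℝ := fun l => Real.sqrt ((1 - u l) / 2) with hx_def
  set y : ℝ → ℝ := fun l => Real.sin (p * l / 2) with hy_def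
  have hu_app : ∀ l : ℝ, u l
      = (Real.cos (a * l) + Real.cos (b * l)) / (2 * Real.cos (c * l / 2)) := fun l => rfl
  have hx_app : ∀ l : ℝ, x l = Real.sqrt ((1 - u l) / 2) := fun l => rfl
  have hy_app : ∀ l : ℝ, y l = Real.sin (p * l / 2) := fun l => rfl
  -- basic tendstos
  have hid0 : Tendsto (fun l : ℝ => l) (𝓝[>] (0:ℝ)) (𝓝 0) :=
    tendsto_id.mono_left nhdsWithin_le_nhds
  have hcosc : Tendsto (fun l : ℝ => Real.cos (c * l / 2)) (𝓝[>] (0:ℝ)) (𝓝 1) := by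
    have hcont : Continuous fun l : ℝ => Real.cos (c * l / 2) := by fun_prop
    have := (hcont.tendsto 0).mono_left (nhdsWithin_le_nhds (s := Set.Ioi (0:ℝ)))
    simpa using this
  have hcos_half : ∀ᶠ l in 𝓝[>] (0:ℝ), 1/2 < Real.cos (c * l / 2) :=
    hcosc.eventually (eventually_gt_nhds (by norm_num))
  -- (1 - u)/l² → p²/2
  have hN : Tendsto (fun l : ℝ =>
      (2 * Real.cos (c * l / 2) - Real.cos (a * l) - Real.cos (b * l)) / l ^ 2)
      (𝓝[>] (0:ℝ)) (𝓝 (p ^ 2)) := by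
    have h := ((H5 a).add (H5 b)).sub ((H5 (c/2)).const_mul 2)
    have hval : a ^ 2 / 2 + b ^ 2 / 2 - 2 * ((c/2) ^ 2 / 2) = p ^ 2 := by
      linear_combination (-(1:ℝ)/2) * hquad
    rw [hval] at h
    apply h.congr (fun l => ?_)
    rw [show c / 2 * l = c * l / 2 by ring]
    ring
  have hu1 : Tendsto (fun l : ℝ => (1 - u l) / l ^ 2) (𝓝[>] (0:ℝ)) (𝓝 (p ^ 2 / 2)) := by
    have h := hN.div (hcosc.const_mul 2) (by norm_num)
    rw [show p ^ 2 / (2 * 1) = p ^ 2 / 2 by ring] at h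
    apply h.congr'
    filter_upwards [hcos_half, self_mem_nhdsWithin] with l hcl hl
    have hl : (0:ℝ) < l := hl
    have hC : Real.cos (c * l / 2) ≠ 0 := ne_of_gt (by linarith only [hcl])
    simp only [Pi.div_apply]
    rw [hu_app l, one_sub_div (mul_ne_zero two_ne_zero hC)]
    ring
  have hu_lim : Tendsto u (𝓝[>] (0:ℝ)) (𝓝 1) := by
    have h1 : Tendsto (fun l : ℝ => Real.cos (a * l) + Real.cos (b * l)) (𝓝 (0:ℝ)) (𝓝 2) := by
      have hcont : Continuous fun l : ℝ => Real.cos (a * l) + Real.cos (b * l) := by fun_prop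
      have h := hcont.tendsto 0
      simpa [show (1:ℝ) + 1 = 2 by norm_num] using h
    have h2 : Tendsto (fun l : ℝ => 2 * Real.cos (c * l / 2)) (𝓝 (0:ℝ)) (𝓝 2) := by
      have hcont : Continuous fun l : ℝ => 2 * Real.cos (c * l / 2) := by fun_prop
      have h := hcont.tendsto 0
      simpa using h
    have h3 := (h1.div h2 two_ne_zero).mono_left (nhdsWithin_le_nhds (s := Set.Ioi (0:ℝ)))
    rw [show (2:ℝ)/2 = 1 by norm_num] at h3
    exact h3
  have h1u_pos : ∀ᶠ l in 𝓝[>] (0:ℝ), 0 < 1 - u l := by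
    filter_upwards [hu1.eventually (eventually_gt_nhds (half_pos (pow_pos hp 2))),
      self_mem_nhdsWithin] with l h1 h2
    have hl : (0:ℝ) < l := h2
    rcases div_pos_iff.mp h1 with ⟨h, _⟩ | ⟨_, h⟩
    · exact h
    · exact absurd h (not_lt.mpr (sq_nonneg l))
  have hu_pos : ∀ᶠ l in 𝓝[>] (0:ℝ), 0 < u l :=
    hu_lim.eventually (eventually_gt_nhds one_pos)
  have hpl0 : Tendsto (fun l : ℝ => p * l / 2) (𝓝[>] (0:ℝ)) (𝓝 0) := by
    have hcont : Continuous fun l : ℝ => p * l / 2 := by fun_prop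
    have := (hcont.tendsto 0).mono_left (nhdsWithin_le_nhds (s := Set.Ioi (0:ℝ)))
    simpa using this
  have hy_pos : ∀ᶠ l in 𝓝[>] (0:ℝ), 0 < y l := by
    filter_upwards [hpl0.eventually (eventually_lt_nhds Real.pi_pos), self_mem_nhdsWithin]
      with l h1 h2
    have hl : (0:ℝ) < l := h2
    rw [hy_app l]
    exact Real.sin_pos_of_pos_of_lt_pi (div_pos (mul_pos hp hl) two_pos) h1
  have hylt : ∀ᶠ l in 𝓝[>] (0:ℝ), p * l / 2 < π / 2 :=
    hpl0.eventually (eventually_lt_nhds (half_pos Real.pi_pos))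
  -- x/l → p/2 and y/l → p/2
  have hx_div : Tendsto (fun l : ℝ => x l / l) (𝓝[>] (0:ℝ)) (𝓝 (p / 2)) := by
    have hin : Tendsto (fun l : ℝ => (1 - u l) / 2 / l ^ 2) (𝓝[>] (0:ℝ)) (𝓝 (p ^ 2 / 4)) := by
      have h := hu1.div_const 2
      rw [show p ^ 2 / 2 / 2 = p ^ 2 / 4 by ring] at h
      apply h.congr (fun l => ?_)
      ring
    have hsq := (Real.continuous_sqrt.tendsto (p ^ 2 / 4)).comp hin
    rw [show Real.sqrt (p ^ 2 / 4) = p / 2 by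
      rw [show p ^ 2 / 4 = (p/2) ^ 2 by ring, Real.sqrt_sq (half_pos hp).le]] at hsq
    apply hsq.congr'
    filter_upwards [h1u_pos, self_mem_nhdsWithin] with l h1 h2
    have hl : (0:ℝ) < l := h2
    show Real.sqrt ((1 - u l) / 2 / l ^ 2) = x l / l
    rw [hx_app l, Real.sqrt_div (by linarith only [h1] : (0:ℝ) ≤ (1 - u l) / 2),
      Real.sqrt_sq hl.le]
  have hy_div : Tendsto (fun l : ℝ => y l / l) (𝓝[>] (0:ℝ)) (𝓝 (p / 2)) := by
    have hmap := tendsto_mul_nhdsNE (p/2) (ne_of_gt (half_pos hp))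
    have h := (H1.comp hmap).const_mul (p/2)
    rw [mul_one] at h
    apply h.congr'
    filter_upwards [self_mem_nhdsWithin] with l hl
    have hl : (0:ℝ) < l := hl
    have hl' : l ≠ 0 := ne_of_gt hl
    have hp' : p ≠ 0 := ne_of_gt hp
    show p / 2 * (Real.sin (p/2 * l) / (p/2 * l)) = y l / l
    rw [hy_app l, show p * l / 2 = p/2 * l by ring]
    field_simp
  have hx_lim : Tendsto x (𝓝[>] (0:ℝ)) (𝓝 0) := by
    have h := hx_div.mul hid0
    rw [mul_zero] at h
    apply h.congr'
    filter_upwards [self_mem_nhdsWithin] with l hl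
    have hl : (0:ℝ) < l := hl
    exact div_mul_cancel₀ (x l) (ne_of_gt hl)
  have hy_lim : Tendsto y (𝓝[>] (0:ℝ)) (𝓝 0) := by
    have h := hy_div.mul hid0
    rw [mul_zero] at h
    apply h.congr'
    filter_upwards [self_mem_nhdsWithin] with l hl
    have hl : (0:ℝ) < l := hl
    exact div_mul_cancel₀ (y l) (ne_of_gt hl)
  have hx_half : ∀ᶠ l in 𝓝[>] (0:ℝ), x l ≤ 1/2 := by
    filter_upwards [hx_lim.eventually (eventually_lt_nhds (by norm_num : (0:ℝ) < 1/2))]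
      with l h
    linarith only [h]
  have hy_half : ∀ᶠ l in 𝓝[>] (0:ℝ), y l ≤ 1/2 := by
    filter_upwards [hy_lim.eventually (eventually_lt_nhds (by norm_num : (0:ℝ) < 1/2))]
      with l h
    linarith only [h]
  -- fourth order : (cos(pl) - u)/l⁴
  set ML : ℝ := (c/2 + p) ^ 4 / 24 + (c/2 - p) ^ 4 / 24 - (a ^ 4 / 24 + b ^ 4 / 24)
    with hML_def
  have hM : Tendsto (fun l : ℝ =>
      (Real.cos ((c/2 + p) * l) + Real.cos ((c/2 - p) * l)
        - Real.cos (a * l) - Real.cos (b * l)) / l ^ 4) (𝓝[>] (0:ℝ)) (𝓝 ML) := by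
    have h := ((H4 (c/2 + p)).add (H4 (c/2 - p))).sub ((H4 a).add (H4 b))
    apply h.congr (fun l => ?_)
    have hnum : (Real.cos ((c/2+p) * l) - 1 + (c/2+p) ^ 2 * l ^ 2 / 2)
        + (Real.cos ((c/2-p) * l) - 1 + (c/2-p) ^ 2 * l ^ 2 / 2)
        - ((Real.cos (a * l) - 1 + a ^ 2 * l ^ 2 / 2)
          + (Real.cos (b * l) - 1 + b ^ 2 * l ^ 2 / 2))
        = Real.cos ((c/2+p) * l) + Real.cos ((c/2-p) * l)
          - Real.cos (a * l) - Real.cos (b * l) := by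
      linear_combination (l ^ 2 / 2) * hquad
    rw [← hnum]
    ring
  have hprod : ∀ l : ℝ, Real.cos ((c/2 + p) * l) + Real.cos ((c/2 - p) * l)
      = 2 * Real.cos (c * l / 2) * Real.cos (p * l) := by
    intro l
    rw [show (c/2 + p) * l = c * l / 2 + p * l by ring,
      show (c/2 - p) * l = c * l / 2 - p * l by ring, Real.cos_add, Real.cos_sub]
    ring
  have h4cos : Tendsto (fun l : ℝ => (Real.cos (p * l) - u l) / l ^ 4)
      (𝓝[>] (0:ℝ)) (𝓝 (ML / 2)) := by
    have h := hM.div (hcosc.const_mul 2) (by norm_num)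
    rw [show ML / (2 * 1) = ML / 2 by ring] at h
    apply h.congr'
    filter_upwards [hcos_half] with l hcl
    simp only [Pi.div_apply]
    have hC : Real.cos (c * l / 2) ≠ 0 := ne_of_gt (by linarith only [hcl])
    have e1 : Real.cos (p * l) - u l
        = (Real.cos ((c/2 + p) * l) + Real.cos ((c/2 - p) * l)
          - Real.cos (a * l) - Real.cos (b * l)) / (2 * Real.cos (c * l / 2)) := by
      rw [hprod l, hu_app l, eq_div_iff (mul_ne_zero two_ne_zero hC), sub_mul,
        div_mul_cancel₀ _ (mul_ne_zero two_ne_zero hC)]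
      ring
    rw [e1]
    ring
  -- (x - y)/l³ → ML/(4p)
  have hsum : Tendsto (fun l : ℝ => x l / l + y l / l) (𝓝[>] (0:ℝ)) (𝓝 p) := by
    have h := hx_div.add hy_div
    rw [show p / 2 + p / 2 = p by ring] at h
    exact h
  have hinv : Tendsto (fun l : ℝ => l / (x l + y l)) (𝓝[>] (0:ℝ)) (𝓝 p⁻¹) := by
    have h := hsum.inv₀ (ne_of_gt hp)
    apply h.congr'
    filter_upwards [hy_pos, self_mem_nhdsWithin] with l hyl hl
    have hl : (0:ℝ) < l := hl
    rw [show x l / l + y l / l = (x l + y l) / l by ring, inv_div]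
  have hxy_div : Tendsto (fun l : ℝ => (x l - y l) / l ^ 3) (𝓝[>] (0:ℝ))
      (𝓝 (ML / 2 * p⁻¹ / 2)) := by
    have h := (h4cos.mul hinv).div_const 2
    apply h.congr'
    filter_upwards [hy_pos, h1u_pos, self_mem_nhdsWithin] with l hyl h1u hl
    have hl : (0:ℝ) < l := hl
    have hx_nn : 0 ≤ x l := Real.sqrt_nonneg _
    have hxys : (0:ℝ) < x l + y l := by linarith only [hyl, hx_nn]
    have hx2 : x l ^ 2 = (1 - u l) / 2 := Real.sq_sqrt (by linarith only [h1u])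
    have hy2 : y l ^ 2 = (1 - Real.cos (p * l)) / 2 := by
      have h := Real.sin_sq_eq_half_sub (p * l / 2)
      rw [show 2 * (p * l / 2) = p * l by ring] at h
      rw [hy_app l]
      linarith only [h]
    have hfac2 : Real.cos (p * l) - u l = 2 * ((x l - y l) * (x l + y l)) := by
      linear_combination (-2 : ℝ) * hx2 + 2 * hy2
    have hlne : l ≠ 0 := ne_of_gt hl
    have hxyne : x l + y l ≠ 0 := ne_of_gt hxys
    show (Real.cos (p * l) - u l) / l ^ 4 * (l / (x l + y l)) / 2 = (x l - y l) / l ^ 3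
    rw [hfac2]
    field_simp
  -- arccos identity
  have heq : ∀ᶠ l in 𝓝[>] (0:ℝ),
      Real.arccos (u l) - p * l = 2 * Real.arcsin (x l) - 2 * Real.arcsin (y l) := by
    filter_upwards [h1u_pos, hu_pos, hylt, self_mem_nhdsWithin] with l h1u hup hyl hl
    have hl : (0:ℝ) < l := hl
    have hu_le : u l ≤ 1 := by linarith only [h1u]
    have hu_ge : (-1:ℝ) ≤ u l := by linarith only [hup]
    have hφ0 : 0 ≤ Real.arccos (u l) := Real.arccos_nonneg _
    have hφπ : Real.arccos (u l) ≤ π := Real.arccos_le_pi _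
    have hcosφ : Real.cos (Real.arccos (u l)) = u l := Real.cos_arccos hu_ge hu_le
    have hsin : Real.sin (Real.arccos (u l) / 2) = x l := by
      rw [Real.sin_half_eq_sqrt hφ0 (by linarith only [Real.pi_pos, hφπ]), hcosφ, hx_app l]
    have harc1 : Real.arcsin (x l) = Real.arccos (u l) / 2 := by
      rw [← hsin, Real.arcsin_sin (by linarith only [Real.pi_pos, hφ0]) (by linarith only [hφπ])]
    have harc2 : Real.arcsin (y l) = p * l / 2 := by
      have h0 : (0:ℝ) ≤ p * l / 2 := (div_pos (mul_pos hp hl) two_pos).le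
      have hneg : -(π/2) ≤ p * l / 2 :=
        le_trans (neg_nonpos_of_nonneg (half_pos Real.pi_pos).le) h0
      rw [hy_app l, Real.arcsin_sin hneg (le_of_lt hyl)]
    rw [harc1, harc2]
    ring
  -- error term squeeze
  have hE : Tendsto (fun l : ℝ =>
      (Real.arccos (u l) - p * l) / l ^ 3 - 2 * ((x l - y l) / l ^ 3))
      (𝓝[>] (0:ℝ)) (𝓝 0) := by
    apply squeeze_zero_norm'
      (a := fun l : ℝ => 2 * (x l + y l) ^ 2 * |(x l - y l) / l ^ 3|)
    · filter_upwards [heq, hx_half, hy_half, hy_pos, self_mem_nhdsWithin]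
        with l heql hxh hyh hyp hl
      have hl : (0:ℝ) < l := hl
      have hx_nn : 0 ≤ x l := Real.sqrt_nonneg _
      have h6 := H6 hx_nn hxh hyp.le hyh
      have hrw : (Real.arccos (u l) - p * l) / l ^ 3 - 2 * ((x l - y l) / l ^ 3)
          = 2 * ((Real.arcsin (x l) - x l) - (Real.arcsin (y l) - y l)) / l ^ 3 := by
        rw [heql]; ring
      have hl3 : (0:ℝ) < l ^ 3 := by positivity
      rw [hrw, Real.norm_eq_abs, abs_div, abs_of_pos hl3,
        show 2 * (x l + y l) ^ 2 * |(x l - y l) / l ^ 3|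
          = 2 * (x l + y l) ^ 2 * |x l - y l| / l ^ 3 by
            rw [abs_div, abs_of_pos hl3]; ring]
      gcongr
      calc |2 * ((Real.arcsin (x l) - x l) - (Real.arcsin (y l) - y l))|
          = 2 * |(Real.arcsin (x l) - x l) - (Real.arcsin (y l) - y l)| := by
            rw [abs_mul]; norm_num
        _ ≤ 2 * ((x l + y l) ^ 2 * |x l - y l|) := by linarith only [h6]
        _ = 2 * (x l + y l) ^ 2 * |x l - y l| := by ring
    · have h1 : Tendsto (fun l : ℝ => 2 * (x l + y l) ^ 2) (𝓝[>] (0:ℝ)) (𝓝 0) := by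
        have h := ((hx_lim.add hy_lim).pow 2).const_mul 2
        simpa using h
      have h2 : Tendsto (fun l : ℝ => |(x l - y l) / l ^ 3|) (𝓝[>] (0:ℝ))
          (𝓝 |ML / 2 * p⁻¹ / 2|) := hxy_div.abs
      have h := h1.mul h2
      simpa using h
  have main : Tendsto (fun l : ℝ => (Real.arccos (u l) - p * l) / l ^ 3)
      (𝓝[>] (0:ℝ)) (𝓝 (ML / (2 * p))) := by
    have h := (hxy_div.const_mul 2).add hE
    have hv : 2 * (ML / 2 * p⁻¹ / 2) + 0 = ML / (2 * p) := by
      rw [add_zero, div_eq_mul_inv ML (2*p), mul_inv]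
      ring
    rw [hv] at h
    apply h.congr (fun l => ?_)
    ring
  -- final algebra
  have ha4 : a ^ 4 = ab ^ 4 * k ^ 2 := by
    rw [ha_def, mul_pow, show sk ^ 4 = (sk ^ 2) ^ 2 by ring, hsk2]
  have hb4 : b ^ 4 = ac ^ 4 * k ^ 2 := by
    rw [hb_def, mul_pow, show sk ^ 4 = (sk ^ 2) ^ 2 by ring, hsk2]
  have hc4 : c ^ 4 = bc ^ 4 * k ^ 2 := by
    rw [hc_def, mul_pow, show sk ^ 4 = (sk ^ 2) ^ 2 by ring, hsk2]
  have hp4 : p ^ 4 = (k * (2 * ab ^ 2 + 2 * ac ^ 2 - bc ^ 2) / 4) ^ 2 := by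
    rw [show p ^ 4 = (p ^ 2) ^ 2 by ring, hp2]
  have hML : ML = -(k ^ 2) * ((ab - ac - bc) * (ab + ac - bc) * (ab - ac + bc) *
      (ab + ac + bc)) / 48 := by
    rw [hML_def]
    linear_combination (1/24) * hc4 + (-(1:ℝ)/24) * ha4 + (-(1:ℝ)/24) * hb4
      + (1/12) * hp4 + (1/8 * c ^ 2 + 1/8 * (bc ^ 2 * k)) * hp2
      + (1/8 * (k * (2 * ab ^ 2 + 2 * ac ^ 2 - bc ^ 2) / 4)) * hc2
      + ((-7:ℝ) * bc ^ 4 / 192 * (sk ^ 2 + k) + (-(bc ^ 2) * k / 32) * S ^ 2) * hsk2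
      + (-(bc ^ 2) * k ^ 2 / 32) * hS2
  have hval : ML / (2 * p) * (1 / sk) = -(k / 48) * ((ab - ac - bc) * (ab + ac - bc) *
      (ab - ac + bc) * (ab + ac + bc)) / S := by
    rw [hML, hp_def]
    have hk' : k ≠ 0 := ne_of_gt hk
    have hsk' : sk ≠ 0 := ne_of_gt hsk
    have hS' : S ≠ 0 := ne_of_gt hS
    field_simp
    ring_nf
    rw [hsk2]
    ring
  have hfun : ∀ l : ℝ, (1 / sk * Real.arccos (u l) - l * S / 2) / l ^ 3
      = (Real.arccos (u l) - p * l) / l ^ 3 * (1 / sk) := by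
    intro l
    have hsk' : sk ≠ 0 := ne_of_gt hsk
    rw [hp_def]
    field_simp
  have final := main.mul_const (1 / sk)
  rw [hval] at final
  apply final.congr (fun l => ?_)
  exact (hfun l).symm
end
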